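/- Let G = (S, C, R) be a monomolecular reaction network such that every connected component of the reaction graph (C, R) is strongly connected. Then G has the siphon/P-semiflow property: every siphon of G contains the support of a P-semiflow. -/

import Mathlib

/-- A reaction network: a finite set of species, a finite set of complexes
(nonnegative vectors supported on the species), and a finite set of reactions
(a digraph on the complexes with no self-loops), such that every complex takes
part in some reaction and every species is part of some complex. -/
structure RN (ι : Type) where
  species : Finset ι
  complexes : Finset (ι → ℝ)
  reactions : Finset ((ι → ℝ) × (ι → ℝ))
  complexes_nonneg : ∀ y ∈ complexes, ∀ i, 0 ≤ y i
  complexes_supp : ∀ y ∈ complexes, ∀ i, y i ≠ 0 → i ∈ species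
  react_mem_fst : ∀ r ∈ reactions, r.1 ∈ complexes
  react_mem_snd : ∀ r ∈ reactions, r.2 ∈ complexes
  no_loops : ∀ r ∈ reactions, r.1 ≠ r.2
  complexes_used : ∀ y ∈ complexes, ∃ r ∈ reactions, r.1 = y ∨ r.2 = y
  species_used : ∀ i ∈ species, ∃ y ∈ complexes, y i ≠ 0

namespace RN

variable {ι : Type}

/-- A siphon: a nonempty set of species such that every reaction having a
product species in it also has a reactant species in it. -/
def IsSiphon (G : RN ι) (T : Set ι) : Prop :=
  T.Nonempty ∧ T ⊆ ↑G.species ∧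
    ∀ r ∈ G.reactions, (∃ i ∈ T, 0 < r.2 i) → ∃ i ∈ T, 0 < r.1 i

/-- A minimal siphon: a siphon not properly containing any other siphon. -/
def MinimalSiphon (G : RN ι) (T : Set ι) : Prop :=
  G.IsSiphon T ∧ ∀ T' : Set ι, G.IsSiphon T' → T' ⊆ T → T' = T

/-- A nonempty set of species is drainable if some finite sequence of reactions
(with repetitions allowed) strictly decreases every one of its coordinates. -/
def Drainable (G : RN ι) (T : Set ι) : Prop :=
  T.Nonempty ∧ T ⊆ ↑G.species ∧
    ∃ L : List ((ι → ℝ) × (ι → ℝ)), (∀ r ∈ L, r ∈ G.reactions) ∧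
      ∀ i ∈ T, (L.map (fun r => r.2 i - r.1 i)).sum < 0

/-- A nonempty set of species is self-replicable if some finite sequence of
reactions (with repetitions allowed) strictly increases every one of its
coordinates. -/
def SelfReplicable (G : RN ι) (T : Set ι) : Prop :=
  T.Nonempty ∧ T ⊆ ↑G.species ∧
    ∃ L : List ((ι → ℝ) × (ι → ℝ)), (∀ r ∈ L, r ∈ G.reactions) ∧
      ∀ i ∈ T, 0 < (L.map (fun r => r.2 i - r.1 i)).sum

/-- A P-semiflow: a nonzero nonnegative vector supported on the species with
ωᵀN = 0, i.e. ω · (y' - y) = 0 for every reaction y → y'. -/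
def IsPSemiflow (G : RN ι) (ω : ι → ℝ) : Prop :=
  (∀ i, 0 ≤ ω i) ∧ (∀ i, ω i ≠ 0 → i ∈ G.species) ∧ ω ≠ 0 ∧
    ∀ r ∈ G.reactions, ∑ i ∈ G.species, ω i * (r.2 i - r.1 i) = 0

/-- The siphon/P-semiflow property: every siphon contains the support of a
P-semiflow. -/
def SiphonPSemiflowProperty (G : RN ι) : Prop :=
  ∀ T : Set ι, G.IsSiphon T → ∃ ω : ι → ℝ, G.IsPSemiflow ω ∧ {i | 0 < ω i} ⊆ T

/-- Consistency: there is a strictly positive T-semiflow, i.e. strictly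
positive reaction weights v with N v = 0. -/
def Consistent (G : RN ι) : Prop :=
  ∃ v : ((ι → ℝ) × (ι → ℝ)) → ℝ, (∀ r ∈ G.reactions, 0 < v r) ∧
    ∀ i : ι, ∑ r ∈ G.reactions, v r * (r.2 i - r.1 i) = 0

/-- Conservativity: there is a strictly positive conservation law ω ≫ 0 with
ωᵀN = 0. -/
def Conservative (G : RN ι) : Prop :=
  ∃ ω : ι → ℝ, (∀ i ∈ G.species, 0 < ω i) ∧
    ∀ r ∈ G.reactions, ∑ i ∈ G.species, ω i * (r.2 i - r.1 i) = 0

/-- A directed reaction path from `y` to `y'` all of whose non-endpoint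
complexes lie in the set `A`. -/
def PathThrough (G : RN ι) (A : Set (ι → ℝ)) (y y' : ι → ℝ) : Prop :=
  ∃ L : List (ι → ℝ), (∀ z ∈ L, z ∈ A) ∧
    List.Chain (fun a b => (a, b) ∈ G.reactions) y (L ++ [y'])

end RN

variable {ι : Type}

/-- The complex consisting of the single species `j` (with unit coefficient),
for `j` in the given set. -/
def InterCplx [DecidableEq ι] (Y : Finset ι) (z : ι → ℝ) : Prop :=
  ∃ j ∈ Y, z = Pi.single j 1

/-- The complex `z` is supported off the set `Y`. -/
def OffSet (Y : Finset ι) (z : ι → ℝ) : Prop := ∀ j ∈ Y, z j = 0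

namespace RN

/-- `Y` is a set of intermediate species of `G`: (I1) every complex is either
supported off `Y` or equals a single species of `Y` with unit coefficient;
(I2) every `Y`-complex is connected to non-intermediate complexes by directed
reaction paths, in both directions, all of whose non-endpoints are
intermediates. -/
def IsIntermediateSet [DecidableEq ι] (G : RN ι) (Y : Finset ι) : Prop :=
  Y.Nonempty ∧ Y ⊆ G.species ∧
    (∀ y ∈ G.complexes, OffSet Y y ∨ InterCplx Y y) ∧
    (∀ j ∈ Y, ∃ y ∈ G.complexes, ∃ y' ∈ G.complexes, OffSet Y y ∧ OffSet Y y' ∧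
      G.PathThrough {z | InterCplx Y z} y (Pi.single j 1) ∧
      G.PathThrough {z | InterCplx Y z} (Pi.single j 1) y')

/-- `G'` is the reduction of `G` by removal of the set of intermediates `Y`:
its reactions are exactly the pairs `y → y'` of distinct non-intermediate
complexes of `G` joined by a directed reaction path all of whose non-endpoints
are intermediates (in particular all reactions of `G` between non-intermediate
complexes). -/
def IsIntermediateReduction [DecidableEq ι] (G : RN ι) (Y : Finset ι) (G' : RN ι) : Prop :=
  ∀ p : (ι → ℝ) × (ι → ℝ), p ∈ G'.reactions ↔
    (p.1 ∈ G.complexes ∧ p.2 ∈ G.complexes ∧ OffSet Y p.1 ∧ OffSet Y p.2 ∧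
      p.1 ≠ p.2 ∧ G.PathThrough {z | InterCplx Y z} p.1 p.2)

end RN

/-- The projection of a complex onto the coordinates outside `E` (the
coordinates in `E` are set to zero). -/
def projOff [DecidableEq ι] (E : Finset ι) (y : ι → ℝ) : ι → ℝ :=
  fun i => if i ∈ E then 0 else y i

namespace RN

/-- `E` is a set of catalysts of `G`, with `GE` the subnetwork of `G` implied
by `E`: (C1) every reaction either leaves the `E`-coordinates untouched or is
supported entirely in `E`; `GE` consists of the reactions of `G` involving
only species of `E`; and (C2) `GE` has no drainable and no self-replicable
siphons. -/
def IsCatalystSet (G GE : RN ι) (E : Finset ι) : Prop :=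
  E.Nonempty ∧ E ⊆ G.species ∧
    (∀ r ∈ G.reactions, (∀ i ∈ E, r.1 i = r.2 i) ∨ (∀ i, i ∉ E → r.1 i = 0 ∧ r.2 i = 0)) ∧
    (∀ p : (ι → ℝ) × (ι → ℝ), p ∈ GE.reactions ↔
      (p ∈ G.reactions ∧ (∀ i, p.1 i ≠ 0 → i ∈ E) ∧ (∀ i, p.2 i ≠ 0 → i ∈ E))) ∧
    (∀ T : Set ι, GE.IsSiphon T → ¬ GE.Drainable T ∧ ¬ GE.SelfReplicable T)

/-- `G'` is the reduction of `G` by removal of the set of catalysts `E`: its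
reactions are the projections off `E` of those reactions of `G` at least one
of whose projected sides is nonzero. -/
def IsCatalystReduction [DecidableEq ι] (G : RN ι) (E : Finset ι) (G' : RN ι) : Prop :=
  ∀ p : (ι → ℝ) × (ι → ℝ), p ∈ G'.reactions ↔
    ∃ r ∈ G.reactions, p = (projOff E r.1, projOff E r.2) ∧
      (projOff E r.1 ≠ 0 ∨ projOff E r.2 ≠ 0)

/-- A monomolecular network: every complex is either zero or a single species
with unit coefficient. -/
def Monomolecular [DecidableEq ι] (G : RN ι) : Prop :=
  ∀ y ∈ G.complexes, y = 0 ∨ ∃ i ∈ G.species, y = Pi.single i 1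

end RN

/-- Proposition 3, (ii) ⇒ (iii): a monomolecular reaction network all of whose
connected components are strongly connected has the siphon/P-semiflow
property. -/
theorem monomolecular_strongly_connected_implies_siphonPSemiflow
    {ι : Type} [DecidableEq ι] (G : RN ι)
    (hmono : G.Monomolecular)
    (hsc : ∀ y ∈ G.complexes, ∀ y' ∈ G.complexes,
      Relation.ReflTransGen
        (fun a b => (a, b) ∈ G.reactions ∨ (b, a) ∈ G.reactions) y y' →
      Relation.ReflTransGen (fun a b => (a, b) ∈ G.reactions) y y') :
    G.SiphonPSemiflowProperty := by
  classical
  intro T hT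
  obtain ⟨⟨i₀, hi₀⟩, hTS, hsip⟩ := hT
  have hi₀S : i₀ ∈ G.species := hTS hi₀
  obtain ⟨y, hyC, hyi₀⟩ := G.species_used i₀ hi₀S
  have hy0 : y = Pi.single i₀ 1 := by
    rcases hmono y hyC with h0 | ⟨k, hk, hk'⟩
    · exact absurd (by simp [h0]) hyi₀
    · subst hk'
      by_cases hik : i₀ = k
      · subst hik; rfl
      · rw [Pi.single_eq_of_ne hik] at hyi₀; exact absurd rfl hyi₀
  rw [hy0] at hyC
  set y₀ : ι → ℝ := Pi.single i₀ 1 with hy₀def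
  -- key: every complex directed-reaching y₀ is a single species of T
  have key : ∀ y, Relation.ReflTransGen (fun a b => (a, b) ∈ G.reactions) y y₀ →
      y ∈ G.complexes → ∃ j ∈ T, y = Pi.single j 1 := by
    intro y hreach
    induction hreach using Relation.ReflTransGen.head_induction_on with
    | refl => intro _; exact ⟨i₀, hi₀, rfl⟩
    | head hstep hrest ih =>
      rename_i a c
      intro haC
      obtain ⟨j, hjT, hc⟩ := ih (G.react_mem_snd (a, c) hstep)
      have hprod : ∃ i ∈ T, 0 < (a, c).2 i := ⟨j, hjT, by simp [hc]⟩
      obtain ⟨i, hiT, hai⟩ := hsip (a, c) hstep hprod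
      rcases hmono a haC with h0 | ⟨k, hk, hk'⟩
      · rw [h0] at hai; simp at hai
      · refine ⟨k, ?_, hk'⟩
        by_cases hik : i = k
        · exact hik ▸ hiT
        · rw [hk'] at hai
          have hai' : (0:ℝ) < Pi.single (M := fun _ => ℝ) k 1 i := hai
          rw [Pi.single_eq_of_ne hik] at hai'
          exact absurd hai' (lt_irrefl 0)
  set ω : ι → ℝ := fun j => if Pi.single j 1 ∈ G.complexes ∧
      Relation.ReflTransGen (fun a b => (a, b) ∈ G.reactions) (Pi.single j 1) y₀
    then (1 : ℝ) else 0 with hωdef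
  -- value of the weighted sum on a complex
  have fval : ∀ y ∈ G.complexes, ∑ i ∈ G.species, ω i * y i =
      if Relation.ReflTransGen (fun a b => (a, b) ∈ G.reactions) y y₀ then (1:ℝ) else 0 := by
    intro y hyC
    rcases hmono y hyC with h0 | ⟨k, hkS, hk'⟩
    · rw [h0]
      have hnr : ¬ Relation.ReflTransGen (fun a b => (a, b) ∈ G.reactions) (0 : ι → ℝ) y₀ := by
        intro hr
        obtain ⟨j, _, hj⟩ := key 0 hr (h0 ▸ hyC)
        have := congrFun hj j
        simp at this
      simp [hnr]
    · subst hk'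
      have hsum : ∑ i ∈ G.species, ω i * Pi.single (M := fun _ => ℝ) k 1 i = ω k := by
        rw [Finset.sum_eq_single k]
        · simp
        · intro b _ hbk
          have : Pi.single (M := fun _ => ℝ) k 1 b = 0 := Pi.single_eq_of_ne hbk 1
          rw [this]; ring
        · intro hk; exact absurd hkS hk
      rw [hsum, hωdef]
      simp only []
      by_cases hr : Relation.ReflTransGen (fun a b => (a, b) ∈ G.reactions) (Pi.single k 1) y₀
      · simp [hr, hyC]
      · simp [hr]
  -- reachability is constant along reactions
  have hiff : ∀ r ∈ G.reactions,
      (Relation.ReflTransGen (fun a b => (a, b) ∈ G.reactions) r.1 y₀ ↔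
       Relation.ReflTransGen (fun a b => (a, b) ∈ G.reactions) r.2 y₀) := by
    intro r hr
    constructor
    · intro h1
      refine hsc r.2 (G.react_mem_snd r hr) y₀ hyC ?_
      refine Relation.ReflTransGen.head (Or.inr hr) ?_
      exact Relation.ReflTransGen.mono (fun _ _ h => Or.inl h) _ _ h1
    · intro h2
      exact Relation.ReflTransGen.head hr h2
  refine ⟨ω, ⟨?_, ?_, ?_, ?_⟩, ?_⟩
  · intro i
    rw [hωdef]
    dsimp only
    split <;> norm_num
  · intro i hωi
    rw [hωdef] at hωi
    by_cases hc : Pi.single i 1 ∈ G.complexes ∧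
        Relation.ReflTransGen (fun a b => (a, b) ∈ G.reactions) (Pi.single i 1) y₀
    · refine G.complexes_supp _ hc.1 i ?_
      simp
    · simp [hc] at hωi
  · intro h0
    have := congrFun h0 i₀
    rw [hωdef] at this
    simp only [Pi.zero_apply] at this
    rw [if_pos ⟨hyC, Relation.ReflTransGen.refl⟩] at this
    norm_num at this
  · intro r hr
    have h1 := fval r.1 (G.react_mem_fst r hr)
    have h2 := fval r.2 (G.react_mem_snd r hr)
    have : ∑ i ∈ G.species, ω i * (r.2 i - r.1 i) =
        (∑ i ∈ G.species, ω i * r.2 i) - ∑ i ∈ G.species, ω i * r.1 i := by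
      rw [← Finset.sum_sub_distrib]
      exact Finset.sum_congr rfl (fun i _ => by ring)
    rw [this, h1, h2]
    rcases (hiff r hr) with ⟨hf, hb⟩
    by_cases hr1 : Relation.ReflTransGen (fun a b => (a, b) ∈ G.reactions) r.1 y₀
    · rw [if_pos hr1, if_pos (hf hr1)]; ring
    · rw [if_neg hr1, if_neg (fun h => hr1 (hb h))]; ring
  · intro i hi
    simp only [Set.mem_setOf_eq] at hi
    rw [hωdef] at hi
    by_cases hc : Pi.single i 1 ∈ G.complexes ∧
        Relation.ReflTransGen (fun a b => (a, b) ∈ G.reactions) (Pi.single i 1) y₀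
    · obtain ⟨j, hjT, hj⟩ := key _ hc.2 hc.1
      have hji : j = i := by
        by_contra hne
        have h2 := congrFun hj j
        have h3 : Pi.single (M := fun _ => ℝ) i 1 j = 0 := Pi.single_eq_of_ne hne 1
        rw [h3, Pi.single_eq_same] at h2
        exact one_ne_zero h2.symm
      exact hji ▸ hjT
    · simp [hc] at hi
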